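/- Let φ : F₂ → Sym(ℤ) be the group homomorphism from the free group on two generators a, b determined by φ(a) = (i ↦ i + 1) and φ(b) = the transposition swapping 0 and 1, and let N = φ⁻¹({σ ∈ Sym(ℤ) | σ(0) = 0}) be the preimage of the stabilizer of 0. Then (i) N is a maximal subgroup of F₂; (ii) N is not a normal subgroup of F₂; and (iii) there is a surjective group homomorphism from N onto the free group F_∞ of countably infinite rank. -/

import Mathlib

/-- Coordinate-permuting action of `Perm ℤ` on `ℤ → FreeGroup ℕ`. -/
def permAction : Equiv.Perm ℤ →* MulAut (ℤ → FreeGroup ℕ) where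
  toFun σ :=
  { toFun := fun f => f ∘ σ.symm
    invFun := fun f => f ∘ σ
    left_inv := fun f => by ext i; simp
    right_inv := fun f => by ext i; simp
    map_mul' := fun f g => rfl }
  map_one' := by ext f i; simp; rfl
  map_mul' := fun σ τ => by ext f i; simp [Equiv.Perm.mul_def]

theorem Equiv.zpow_addRight {α : Type*} [AddCommGroup α] (a : α) (n : ℤ) :
    Equiv.addRight a ^ n = Equiv.addRight (n • a) := by
  induction n using Int.induction_on with
  | zero => ext; simp
  | succ k ih => ext x; rw [zpow_add_one, ih, add_zsmul, one_zsmul]; simp [add_assoc, add_comm, add_left_comm]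
  | pred k ih => ext x; rw [zpow_sub_one, ih, sub_zsmul, one_zsmul]; simp [Equiv.Perm.inv_def, sub_eq_add_neg, add_assoc, add_comm, add_left_comm]

/-- Let `φ : F₂ → Sym(ℤ)` send the generator `a` (`= of false`) to the
translation `i ↦ i + 1` and the generator `b` (`= of true`) to the transposition `(0 1)`,
and let `N` be the preimage of the stabilizer of `0`. Then `N` is a non-normal maximal
subgroup of `F₂`, and `N` admits an epimorphism onto the free group of countably infinite
rank. -/
theorem stabilizer_preimage_maximal_nonnormal_free_quotient
    (φ : FreeGroup Bool →* Equiv.Perm ℤ)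
    (ha : φ (FreeGroup.of false) = Equiv.addRight (1 : ℤ))
    (hb : φ (FreeGroup.of true) = Equiv.swap 0 1)
    (N : Subgroup (FreeGroup Bool))
    (hN : N = Subgroup.comap φ (MulAction.stabilizer (Equiv.Perm ℤ) (0 : ℤ))) :
    IsCoatom N ∧ ¬ N.Normal ∧ ∃ f : N →* FreeGroup ℕ, Function.Surjective f := by
  set a := FreeGroup.of false with ha'
  set b := FreeGroup.of true with hb'
  have mem : ∀ g : FreeGroup Bool, g ∈ N ↔ φ g 0 = 0 := by
    intro g
    rw [hN]
    simp [Subgroup.mem_comap, MulAction.mem_stabilizer_iff, Equiv.Perm.smul_def]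
  have hA : ∀ k : ℤ, φ (a ^ k) = Equiv.addRight k := by
    intro k
    rw [map_zpow, ha, Equiv.zpow_addRight, smul_eq_mul, mul_one]
  have htk : ∀ k x : ℤ, φ (a ^ k * b * a ^ (-k)) x
      = if x = k then k + 1 else if x = k + 1 then k else x := by
    intro k x
    rw [map_mul, map_mul, hA, hA, hb]
    simp only [Equiv.Perm.mul_apply, Equiv.coe_addRight, Equiv.swap_apply_def]
    split_ifs <;> omega
  have pos : ∀ n : ℕ, ∃ w, φ w 0 = 0 ∧ φ w ((n : ℤ) + 1) = 1 := by
    intro n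
    induction n with
    | zero => exact ⟨1, by simp⟩
    | succ n ih =>
      obtain ⟨w, h0, h1⟩ := ih
      refine ⟨w * (a ^ ((n : ℤ) + 1) * b * a ^ (-((n : ℤ) + 1))), ?_, ?_⟩
      · rw [map_mul, Equiv.Perm.mul_apply, htk, if_neg (by omega), if_neg (by omega)]
        exact h0
      · push_cast
        rw [map_mul, Equiv.Perm.mul_apply, htk, if_neg (by omega), if_pos (by ring)]
        exact h1
  have neg : ∀ n : ℕ, ∃ w, φ w 0 = 0 ∧ φ w (-(n : ℤ) - 1) = -1 := by
    intro n
    induction n with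
    | zero => exact ⟨1, by simp⟩
    | succ n ih =>
      obtain ⟨w, h0, h1⟩ := ih
      refine ⟨w * (a ^ (-(n : ℤ) - 2) * b * a ^ (-(-(n : ℤ) - 2))), ?_, ?_⟩
      · rw [map_mul, Equiv.Perm.mul_apply, htk, if_neg (by omega), if_neg (by omega)]
        exact h0
      · push_cast
        rw [map_mul, Equiv.Perm.mul_apply, htk, if_pos (by ring)]
        have h2 : (-(n : ℤ) - 2) + 1 = -(n : ℤ) - 1 := by ring
        rw [h2]
        exact h1
  have wminus : ∃ w, φ w 0 = 0 ∧ φ w (-1) = 1 := by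
    set t := a ^ (-1 : ℤ) * b * a ^ (-(-1 : ℤ)) with htdef
    have htm : ∀ x : ℤ, φ t x = if x = -1 then 0 else if x = 0 then -1 else x := by
      intro x
      rw [htdef, htk]
      split_ifs <;> omega
    refine ⟨t * b * t, ?_, ?_⟩
    · rw [map_mul, map_mul, Equiv.Perm.mul_apply, Equiv.Perm.mul_apply, htm, hb]
      norm_num [htm, Equiv.swap_apply_def]
    · rw [map_mul, map_mul, Equiv.Perm.mul_apply, Equiv.Perm.mul_apply, htm, hb]
      norm_num [htm, Equiv.swap_apply_def]
  have key1 : ∀ k : ℤ, k ≠ 0 → ∃ w, φ w 0 = 0 ∧ φ w k = 1 := by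
    intro k hk
    rcases lt_or_gt_of_ne hk with h | h
    · obtain ⟨v, v0, vk⟩ := neg (-k - 1).toNat
      obtain ⟨wm, wm0, wm1⟩ := wminus
      have hk' : (-((-k - 1).toNat : ℤ) - 1) = k := by omega
      rw [hk'] at vk
      exact ⟨wm * v, by rw [map_mul, Equiv.Perm.mul_apply, v0, wm0],
        by rw [map_mul, Equiv.Perm.mul_apply, vk, wm1]⟩
    · obtain ⟨w, w0, wk⟩ := pos (k - 1).toNat
      have hk' : (((k - 1).toNat : ℤ) + 1) = k := by omega
      rw [hk'] at wk
      exact ⟨w, w0, wk⟩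
  have haN : a ∉ N := by
    rw [mem, ha]
    norm_num
  have habN : a⁻¹ * b ∈ N := by
    rw [mem, map_mul, map_inv, Equiv.Perm.mul_apply, hb, ha]
    norm_num [Equiv.swap_apply_def]
  refine ⟨⟨?_, ?_⟩, ?_, ?_⟩
  -- N is proper
  · intro h
    exact haN (h ▸ Subgroup.mem_top a)
  -- N is maximal
  · intro H hlt
    obtain ⟨h, hH, hhN⟩ := SetLike.exists_of_lt hlt
    have hNH : N ≤ H := hlt.le
    have hk : φ h 0 ≠ 0 := fun hc => hhN ((mem h).mpr hc)
    obtain ⟨w, w0, wk⟩ := key1 (φ h 0) hk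
    have hwH : w ∈ H := hNH ((mem w).mpr w0)
    have hwh : φ (w * h) 0 = 1 := by rw [map_mul, Equiv.Perm.mul_apply, wk]
    have haH : a ∈ H := by
      have h1 : a⁻¹ * (w * h) ∈ N := by
        rw [mem, map_mul, map_inv, Equiv.Perm.mul_apply, hwh, ha]
        norm_num
      have h2 : a⁻¹ * (w * h) ∈ H := hNH h1
      have h3 : w * h ∈ H := H.mul_mem hwH hH
      have heq : (w * h) * (a⁻¹ * (w * h))⁻¹ = a := by group
      exact heq ▸ H.mul_mem h3 (H.inv_mem h2)
    have hbH : b ∈ H := by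
      have heq : a * (a⁻¹ * b) = b := by group
      exact heq ▸ H.mul_mem haH (hNH habN)
    rw [eq_top_iff]
    intro g _
    induction g using FreeGroup.induction_on with
    | C1 => exact H.one_mem
    | of x => cases x <;> assumption
    | inv_of x ih => exact H.inv_mem (ih trivial)
    | mul x y ihx ihy => exact H.mul_mem (ihx trivial) (ihy trivial)
  -- N is not normal
  · intro hn
    have h1 : a * b * a⁻¹ ∈ N := by
      rw [mem, map_mul, map_mul, map_inv, ha, hb]
      simp [Equiv.Perm.mul_apply, Equiv.swap_apply_def]
    have h2 := hn.conj_mem _ h1 a⁻¹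
    have h3 : a⁻¹ * (a * b * a⁻¹) * a⁻¹⁻¹ = b := by group
    rw [h3] at h2
    rw [mem, hb] at h2
    norm_num at h2
  -- the epimorphism onto the free group of countable rank
  · set fb : ℤ → FreeGroup ℕ := fun i => FreeGroup.of i.natAbs with hfb
    set Φ : FreeGroup Bool →* SemidirectProduct (ℤ → FreeGroup ℕ) (Equiv.Perm ℤ) permAction :=
      FreeGroup.lift (fun x : Bool =>
        if x then ⟨fb, Equiv.swap 0 1⟩ else ⟨1, Equiv.addRight 1⟩) with hΦ
    have hinr : (⟨1, Equiv.addRight 1⟩ :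
        SemidirectProduct (ℤ → FreeGroup ℕ) (Equiv.Perm ℤ) permAction)
        = SemidirectProduct.inr (Equiv.addRight 1) := rfl
    have hΦa : Φ a = ⟨1, Equiv.addRight 1⟩ := by rw [ha', hΦ, FreeGroup.lift_apply_of]; rfl
    have hΦb : Φ b = ⟨fb, Equiv.swap 0 1⟩ := by rw [hb', hΦ, FreeGroup.lift_apply_of]; rfl
    have hright : ∀ g, (Φ g).right = φ g := by
      intro g
      have : (SemidirectProduct.rightHom.comp Φ) = φ := by
        apply FreeGroup.ext_hom
        intro x
        cases x <;>
          simp [SemidirectProduct.rightHom, ← ha', ← hb', hΦa, hΦb, ha, hb]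
      calc (Φ g).right = (SemidirectProduct.rightHom.comp Φ) g := rfl
        _ = φ g := by rw [this]
    refine ⟨{ toFun := fun n => (Φ n.1).left 0
              map_one' := by simp
              map_mul' := ?_ }, ?_⟩
    · intro x y
      have hx : φ x.1 0 = 0 := (mem x.1).mp x.2
      simp only [Subgroup.coe_mul, map_mul, SemidirectProduct.mul_left, Pi.mul_apply]
      congr 1
      show (Φ y.1).left ((Φ x.1).right.symm 0) = (Φ y.1).left 0
      rw [hright, (Equiv.symm_apply_eq _).mpr hx.symm]
    · intro g
      induction g using FreeGroup.induction_on with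
      | C1 => exact ⟨1, by simp⟩
      | of m =>
        set j : ℤ := Equiv.swap (0 : ℤ) 1 m with hj
        refine ⟨⟨a ^ (-(m : ℤ)) * b * a ^ j, ?_⟩, ?_⟩
        · rw [mem]
          rw [map_mul, map_mul, hA, hA, hb]
          simp [hj]
        · show (Φ (a ^ (-(m : ℤ)) * b * a ^ j)).left 0 = FreeGroup.of m
          have h1 : Φ (a ^ (-(m : ℤ)))
              = SemidirectProduct.inr ((Equiv.addRight 1) ^ (-(m : ℤ))) := by
            rw [map_zpow, hΦa, hinr, ← map_zpow]
          have h2 : Φ (a ^ j) = SemidirectProduct.inr ((Equiv.addRight 1) ^ j) := by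
            rw [map_zpow, hΦa, hinr, ← map_zpow]
          rw [map_mul, map_mul, h1, h2, hΦb]
          simp only [SemidirectProduct.mul_left, SemidirectProduct.left_inr,
            SemidirectProduct.right_inr, one_mul, map_one, mul_one]
          show (fb ∘ ((Equiv.addRight (1:ℤ)) ^ (-(m:ℤ))).symm) 0 = FreeGroup.of m
          rw [Equiv.zpow_addRight]
          simp [hfb]
      | inv_of x ih =>
        obtain ⟨n, hn⟩ := ih
        exact ⟨n⁻¹, by rw [map_inv, hn]⟩
      | mul x y ihx ihy =>
        obtain ⟨n, hn⟩ := ihx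
        obtain ⟨n', hn'⟩ := ihy
        exact ⟨n * n', by rw [map_mul, hn, hn']⟩
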